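/- arXiv:2004.00796 — 5 statements merged into one kernel-verified Lean document; each statement's English description precedes it below -/
import Mathlib

section
/- Let n be a positive natural number and let π : (Fin n → ℝ) → ℝ be nonnegative and MTP2, i.e., π(x)·π(y) ≤ π(x ⊓ y)·π(x ⊔ y) for all x, y, where ⊓ and ⊔ denote componentwise minimum and maximum. Let w : (Fin n → ℝ) → ℝ be nonnegative and monotone increasing with respect to the componentwise order. Then π ≤_lr π·w in the multivariate likelihood ratio order: for all x, y, π(x)·π(y)·w(y) ≤ π(x ⊓ y)·π(x ⊔ y)·w(x ⊔ y). -/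
theorem mtp2_weighted_lr_order (n : ℕ) (hn : 0 < n)
    (pr w : (Fin n → ℝ) → ℝ)
    (hpr : ∀ x, 0 ≤ pr x)
    (hmtp2 : ∀ x y, pr x * pr y ≤ pr (x ⊓ y) * pr (x ⊔ y))
    (hw0 : ∀ x, 0 ≤ w x) (hw : Monotone w) :
    ∀ x y, pr x * pr y * w y ≤ pr (x ⊓ y) * pr (x ⊔ y) * w (x ⊔ y) := by
  intro x y
  exact mul_le_mul (hmtp2 x y) (hw le_sup_right)
    (hw0 y) (mul_nonneg (hpr _) (hpr _))
end

section
/- Let n, m be positive natural numbers, let π : (Fin n → ℝ) → ℝ be nonnegative and MTP2 (π(x)·π(y) ≤ π(x ⊓ y)·π(x ⊔ y) for all x, y, with ⊓, ⊔ componentwise min and max), and let h_k : (Fin n → ℝ) → ℝ for k ∈ Fin m each be monotone increasing with respect to the componentwise order. For t : Fin m → ℝ define π_t(θ) := π(θ)·exp(∑ k, h_k(θ)·t k). Then for every t with t k ≥ 0 for all k: (i) π ≤_lr π_t, i.e., π(x)·π_t(y) ≤ π(x ⊓ y)·π_t(x ⊔ y) for all x, y; and (ii) π_{−t} ≤_lr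 π, i.e., π_{−t}(x)·π(y) ≤ π_{−t}(x ⊓ y)·π(x ⊔ y) for all x, y. Thus t = ε and t = −ε correspond to the upper and lower bounds of the class. -/
theorem multivariate_abc_priors_lr_order (n m : ℕ) (hn : 0 < n) (hm : 0 < m)
    (pr : (Fin n → ℝ) → ℝ) (hpr : ∀ x, 0 ≤ pr x)
    (hmtp2 : ∀ x y, pr x * pr y ≤ pr (x ⊓ y) * pr (x ⊔ y))
    (h : Fin m → (Fin n → ℝ) → ℝ) (hmono : ∀ k, Monotone (h k))
    (pit : (Fin m → ℝ) → (Fin n → ℝ) → ℝ)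
    (hdef : ∀ t θ, pit t θ = pr θ * Real.exp (∑ k, h k θ * t k))
    (t : Fin m → ℝ) (ht : ∀ k, 0 ≤ t k) :
    (∀ x y, pr x * pit t y ≤ pr (x ⊓ y) * pit t (x ⊔ y)) ∧
    (∀ x y, pit (-t) x * pr y ≤ pit (-t) (x ⊓ y) * pr (x ⊔ y)) := by
  constructor
  · intro x y
    rw [hdef, hdef]
    have hsum : (∑ k, h k y * t k) ≤ ∑ k, h k (x ⊔ y) * t k := by
      apply Finset.sum_le_sum
      intro k _
      exact mul_le_mul_of_nonneg_right (hmono k le_sup_right) (ht k)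
    calc pr x * (pr y * Real.exp (∑ k, h k y * t k))
        = pr x * pr y * Real.exp (∑ k, h k y * t k) := by ring
      _ ≤ pr (x ⊓ y) * pr (x ⊔ y) * Real.exp (∑ k, h k (x ⊔ y) * t k) := by
          apply mul_le_mul (hmtp2 x y) (Real.exp_le_exp.2 hsum)
            (Real.exp_pos _).le (mul_nonneg (hpr _) (hpr _))
      _ = pr (x ⊓ y) * (pr (x ⊔ y) * Real.exp (∑ k, h k (x ⊔ y) * t k)) := by ring
  · intro x y
    rw [hdef, hdef]
    have hsum : (∑ k, h k x * (-t) k) ≤ ∑ k, h k (x ⊓ y) * (-t) k := by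
      apply Finset.sum_le_sum
      intro k _
      have := mul_le_mul_of_nonneg_right (hmono k (inf_le_left : x ⊓ y ≤ x)) (ht k)
      simp only [Pi.neg_apply, mul_neg, neg_le_neg_iff]
      linarith
    calc pr x * Real.exp (∑ k, h k x * (-t) k) * pr y
        = pr x * pr y * Real.exp (∑ k, h k x * (-t) k) := by ring
      _ ≤ pr (x ⊓ y) * pr (x ⊔ y) * Real.exp (∑ k, h k (x ⊓ y) * (-t) k) := by
          apply mul_le_mul (hmtp2 x y) (Real.exp_le_exp.2 hsum)
            (Real.exp_pos _).le (mul_nonneg (hpr _) (hpr _))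
      _ = pr (x ⊓ y) * Real.exp (∑ k, h k (x ⊓ y) * (-t) k) * pr (x ⊔ y) := by ring
end

section
/- Let Θ and X be types, let A, C : Θ → ℝ with A(θ) > 0 for all θ, B : X → ℝ, S : X → ℝ, and define the exponential family likelihood f(x, θ) := A(θ)·B(x)·exp(C(θ)·S(x)) and, for real hyper-parameters k, l, the conjugate prior kernel π_{k,l}(θ) := (A θ) ^ k · exp(C(θ)·l) (real power). Then for any two data points x⁰, x' ∈ X, setting ε := S(x') − S(x⁰), the identity B(x⁰) · π_{k,l}(θ) · f(x', θ) = B(x') · π_{k,l+ε}(θ) · f(x⁰, θ) holds for every θ. -/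
theorem exponential_family_conjugate_duality
    (Θ X : Type*) (A C : Θ → ℝ) (hA : ∀ θ, 0 < A θ)
    (B : X → ℝ) (S : X → ℝ)
    (f : X → Θ → ℝ) (hf : ∀ x θ, f x θ = A θ * B x * Real.exp (C θ * S x))
    (prior : ℝ → ℝ → Θ → ℝ)
    (hprior : ∀ k l θ, prior k l θ = (A θ) ^ k * Real.exp (C θ * l))
    (k l : ℝ) (x0 x' : X) :
    ∀ θ, B x0 * (prior k l θ * f x' θ) =
      B x' * (prior k (l + (S x' - S x0)) θ * f x0 θ) := by
  intro θ
  have h : Real.exp (C θ * l) * Real.exp (C θ * S x') =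
      Real.exp (C θ * (l + (S x' - S x0))) * Real.exp (C θ * S x0) := by
    rw [← Real.exp_add, ← Real.exp_add]; ring_nf
  simp only [hf, hprior]
  linear_combination (B x0 * A θ ^ k * A θ * B x') * h
end

section
/- Let σ, s, n be positive reals and m, x̄, ε real. Define s'² by 1/s'² = 1/s² + n/σ², w₁ := s'²/s², w₂ := n·s'²/σ². Then there exists a constant c > 0 such that for all μ ∈ ℝ: exp(−(μ − m)²/(2s²)) · exp(−n·(μ − (x̄ + ε))²/(2σ²)) = c · exp(−(μ − (m + (w₂/w₁)·ε))²/(2s²)) · exp(−n·(μ − x̄)²/(2σ²)). Moreover, if s² = σ²/n then w₂/w₁ = 1. -/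
theorem normal_conjugate_duality (σ s n : ℝ) (hσ : 0 < σ) (hs : 0 < s) (hn : 0 < n)
    (m xbar ε : ℝ) (s' w₁ w₂ : ℝ)
    (hs' : 1 / s' ^ 2 = 1 / s ^ 2 + n / σ ^ 2)
    (hw1 : w₁ = s' ^ 2 / s ^ 2) (hw2 : w₂ = n * s' ^ 2 / σ ^ 2) :
    (∃ c : ℝ, 0 < c ∧ ∀ μ : ℝ,
      Real.exp (-(μ - m) ^ 2 / (2 * s ^ 2)) *
          Real.exp (-n * (μ - (xbar + ε)) ^ 2 / (2 * σ ^ 2)) =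
        c * (Real.exp (-(μ - (m + (w₂ / w₁) * ε)) ^ 2 / (2 * s ^ 2)) *
          Real.exp (-n * (μ - xbar) ^ 2 / (2 * σ ^ 2)))) ∧
    (s ^ 2 = σ ^ 2 / n → w₂ / w₁ = 1) := by
  have hs2 : (s : ℝ) ^ 2 ≠ 0 := by positivity
  have hσ2 : (σ : ℝ) ^ 2 ≠ 0 := by positivity
  have hpos : 0 < 1 / s ^ 2 + n / σ ^ 2 := by positivity
  have hs'2 : s' ^ 2 ≠ 0 := by
    intro h
    rw [h] at hs'
    simp only [one_div] at hs' hpos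
    exact absurd hs'.symm (by simp at hs' ⊢; linarith)
  have hk : w₂ / w₁ = n * s ^ 2 / σ ^ 2 := by
    rw [hw1, hw2]
    field_simp
    exact mul_inv_cancel₀ (fun h => hs'2 (by simp [h]))
  constructor
  · set k := w₂ / w₁ with hkdef
    refine ⟨Real.exp (-m ^ 2 / (2 * s ^ 2) + -n * (xbar + ε) ^ 2 / (2 * σ ^ 2)
        - (-(m + k * ε) ^ 2 / (2 * s ^ 2) + -n * xbar ^ 2 / (2 * σ ^ 2))), Real.exp_pos _, ?_⟩
    intro μ
    rw [← Real.exp_add, ← Real.exp_add, ← Real.exp_add]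
    congr 1
    rw [hk]
    field_simp
    ring
  · intro h
    rw [hk, h]
    field_simp
end

section
/- Let π : ℝ → ℝ be a measurable nonnegative probability density with respect to Lebesgue measure (∫ π = 1), let h : ℝ → ℝ be measurable, and let ε > 0 be such that ∫ π(θ)·exp(ε·|h(θ)|) dθ < ∞. For t ∈ [−ε, ε] define Z(t) := ∫ π(θ)·exp(h(θ)·t) dθ and π_t(θ) := π(θ)·exp(h(θ)·t)/Z(t), and define the Kolmogorov distance K(t) := ⨆ τ : ℝ, |∫_{(−∞, τ]} π(θ) dθ − ∫_{(−∞, τ]} π_t(θ) dθ|. Then K(t) → 0 as t → 0 (limit along t in [−ε, ε]). -/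
open MeasureTheory

private lemma abs_int_le_int_abs (f : ℝ → ℝ) :
    |∫ a, f a| ≤ ∫ a, |f a| := by
  simpa [Real.norm_eq_abs] using norm_integral_le_integral_norm (μ := volume) f

private lemma abs_set_int_le_int_abs (f : ℝ → ℝ) (s : Set ℝ) :
    |∫ a in s, f a| ≤ ∫ a in s, |f a| := by
  simpa [Real.norm_eq_abs] using
    norm_integral_le_integral_norm (μ := volume.restrict s) f

theorem kolmogorov_distance_tendsto_zero (pr h : ℝ → ℝ)
    (hprm : Measurable pr) (hhm : Measurable h)
    (hpr : ∀ θ, 0 ≤ pr θ) (hpr1 : ∫ θ, pr θ = 1)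
    (ε : ℝ) (hε : 0 < ε)
    (hint : Integrable (fun θ => pr θ * Real.exp (ε * |h θ|))) :
    Filter.Tendsto
      (fun t : ℝ => ⨆ τ : ℝ,
        |(∫ θ in Set.Iic τ, pr θ) -
          ∫ θ in Set.Iic τ, pr θ * Real.exp (h θ * t) /
            (∫ θ', pr θ' * Real.exp (h θ' * t))|)
      (nhdsWithin 0 (Set.Icc (-ε) ε)) (nhds 0) := by
  classical
  set l := nhdsWithin (0 : ℝ) (Set.Icc (-ε) ε) with hl
  -- basic pointwise bound
  have hexp_bound : ∀ t ∈ Set.Icc (-ε) ε, ∀ θ,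
      Real.exp (h θ * t) ≤ Real.exp (ε * |h θ|) := by
    intro t ht θ
    apply Real.exp_le_exp.mpr
    calc h θ * t ≤ |h θ * t| := le_abs_self _
      _ = |h θ| * |t| := abs_mul _ _
      _ ≤ |h θ| * ε := by
          apply mul_le_mul_of_nonneg_left _ (abs_nonneg _)
          exact abs_le.mpr ⟨ht.1, ht.2⟩
      _ = ε * |h θ| := mul_comm _ _
  have hpr_int : Integrable pr := by
    refine hint.mono hprm.aestronglyMeasurable (Filter.Eventually.of_forall fun θ => ?_)
    rw [Real.norm_eq_abs, Real.norm_eq_abs, abs_of_nonneg (hpr θ),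
      abs_of_nonneg (mul_nonneg (hpr θ) (Real.exp_nonneg _))]
    nth_rewrite 1 [← mul_one (pr θ)]
    exact mul_le_mul_of_nonneg_left (Real.one_le_exp (mul_nonneg hε.le (abs_nonneg _))) (hpr θ)
  have hInt : ∀ t ∈ Set.Icc (-ε) ε,
      Integrable (fun θ => pr θ * Real.exp (h θ * t)) := by
    intro t ht
    refine hint.mono ((hprm.mul ((hhm.mul measurable_const).exp)).aestronglyMeasurable)
      (Filter.Eventually.of_forall fun θ => ?_)
    rw [Real.norm_eq_abs, Real.norm_eq_abs,
      abs_of_nonneg (mul_nonneg (hpr θ) (Real.exp_nonneg _)),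
      abs_of_nonneg (mul_nonneg (hpr θ) (Real.exp_nonneg _))]
    exact mul_le_mul_of_nonneg_left (hexp_bound t ht θ) (hpr θ)
  have hIntAbs : ∀ t ∈ Set.Icc (-ε) ε,
      Integrable (fun θ => pr θ * |Real.exp (h θ * t) - 1|) := by
    intro t ht
    have : Integrable (fun θ => pr θ * Real.exp (ε * |h θ|) + pr θ) := hint.add hpr_int
    refine this.mono ((hprm.mul (((hhm.mul measurable_const).exp.sub
      measurable_const).abs)).aestronglyMeasurable)
      (Filter.Eventually.of_forall fun θ => ?_)
    rw [Real.norm_eq_abs, Real.norm_eq_abs,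
      abs_of_nonneg (mul_nonneg (hpr θ) (abs_nonneg _)),
      abs_of_nonneg (add_nonneg (mul_nonneg (hpr θ) (Real.exp_nonneg _)) (hpr θ))]
    calc pr θ * |Real.exp (h θ * t) - 1|
        ≤ pr θ * (Real.exp (h θ * t) + 1) := by
          apply mul_le_mul_of_nonneg_left _ (hpr θ)
          calc |Real.exp (h θ * t) - 1| ≤ |Real.exp (h θ * t)| + |(1:ℝ)| := abs_sub _ _
            _ = Real.exp (h θ * t) + 1 := by
                rw [abs_of_nonneg (Real.exp_nonneg _), abs_one]
      _ ≤ pr θ * (Real.exp (ε * |h θ|) + 1) := by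
          apply mul_le_mul_of_nonneg_left _ (hpr θ)
          linarith [hexp_bound t ht θ]
      _ = pr θ * Real.exp (ε * |h θ|) + pr θ := by ring
  -- positivity of Z t
  have hZpos : ∀ t ∈ Set.Icc (-ε) ε, 0 < ∫ θ, pr θ * Real.exp (h θ * t) := by
    intro t ht
    rw [integral_pos_iff_support_of_nonneg
      (fun θ => mul_nonneg (hpr θ) (Real.exp_nonneg _)) (hInt t ht)]
    have hsupp : (Function.support fun θ => pr θ * Real.exp (h θ * t))
        = Function.support pr := by
      ext θ
      simp only [Function.mem_support, mul_ne_zero_iff]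
      constructor
      · exact fun h' => h'.1
      · exact fun h' => ⟨h', (Real.exp_pos _).ne'⟩
    rw [hsupp]
    have := (integral_pos_iff_support_of_nonneg hpr hpr_int).mp (by rw [hpr1]; norm_num)
    exact this
  -- F t := ∫ pr θ * |exp (h θ * t) - 1|
  set F : ℝ → ℝ := fun t => ∫ θ, pr θ * |Real.exp (h θ * t) - 1| with hF
  have hF0 : Filter.Tendsto F l (nhds 0) := by
    have : Filter.Tendsto F l (nhds (∫ _θ : ℝ, (0:ℝ))) := by
      apply tendsto_integral_filter_of_dominated_convergence
        (fun θ => pr θ * (Real.exp (ε * |h θ|) + 1))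
      · filter_upwards with t
        exact (hprm.mul (((hhm.mul measurable_const).exp.sub
          measurable_const).abs)).aestronglyMeasurable
      · have hmem : ∀ᶠ t in l, t ∈ Set.Icc (-ε) ε := self_mem_nhdsWithin
        filter_upwards [hmem] with t ht
        filter_upwards with θ
        rw [Real.norm_eq_abs, abs_of_nonneg (mul_nonneg (hpr θ) (abs_nonneg _))]
        apply mul_le_mul_of_nonneg_left _ (hpr θ)
        calc |Real.exp (h θ * t) - 1| ≤ |Real.exp (h θ * t)| + |(1:ℝ)| := abs_sub _ _
          _ = Real.exp (h θ * t) + 1 := by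
              rw [abs_of_nonneg (Real.exp_nonneg _), abs_one]
          _ ≤ Real.exp (ε * |h θ|) + 1 := by linarith [hexp_bound t ht θ]
      · have : Integrable (fun θ => pr θ * Real.exp (ε * |h θ|) + pr θ) := hint.add hpr_int
        refine this.congr (Filter.Eventually.of_forall fun θ => ?_)
        ring
      · filter_upwards with θ
        have hc : Continuous (fun t : ℝ => pr θ * |Real.exp (h θ * t) - 1|) := by
          continuity
        have := (hc.tendsto 0).mono_left (nhdsWithin_le_nhds (s := Set.Icc (-ε) ε))
        simpa using this
    simpa using this
  -- |Z t - 1| ≤ F t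
  have hZ1 : ∀ t ∈ Set.Icc (-ε) ε,
      |(∫ θ, pr θ * Real.exp (h θ * t)) - 1| ≤ F t := by
    intro t ht
    have heq : ∫ θ, pr θ * (Real.exp (h θ * t) - 1)
        = (∫ θ, pr θ * Real.exp (h θ * t)) - ∫ θ, pr θ := by
      rw [← integral_sub (hInt t ht) hpr_int]
      congr 1; ext θ; ring
    rw [show (∫ θ, pr θ * Real.exp (h θ * t)) - 1
        = ∫ θ, pr θ * (Real.exp (h θ * t) - 1) by rw [heq, hpr1]]
    calc |∫ θ, pr θ * (Real.exp (h θ * t) - 1)|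
        ≤ ∫ θ, |pr θ * (Real.exp (h θ * t) - 1)| :=
          abs_int_le_int_abs _
      _ = F t := by
          congr 1; ext θ
          rw [abs_mul, abs_of_nonneg (hpr θ)]
  -- L1 bound for each t
  have hL1 : ∀ t ∈ Set.Icc (-ε) ε,
      ∫ θ, |pr θ - pr θ * Real.exp (h θ * t) / (∫ θ', pr θ' * Real.exp (h θ' * t))|
        ≤ 2 * F t := by
    intro t ht
    set Z := ∫ θ', pr θ' * Real.exp (h θ' * t) with hZdef
    have hZp := hZpos t ht
    have hptwise : ∀ θ, |pr θ - pr θ * Real.exp (h θ * t) / Z|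
        ≤ pr θ * |Real.exp (h θ * t) - 1|
          + (|Z - 1| / Z) * (pr θ * Real.exp (h θ * t)) := by
      intro θ
      have hsplit : pr θ - pr θ * Real.exp (h θ * t) / Z
          = pr θ * (1 - Real.exp (h θ * t))
            + (pr θ * Real.exp (h θ * t)) * (1 - 1 / Z) := by
        field_simp
        ring
      rw [hsplit]
      calc |pr θ * (1 - Real.exp (h θ * t)) + (pr θ * Real.exp (h θ * t)) * (1 - 1 / Z)|
          ≤ |pr θ * (1 - Real.exp (h θ * t))|
            + |(pr θ * Real.exp (h θ * t)) * (1 - 1 / Z)| := abs_add_le _ _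
        _ = pr θ * |Real.exp (h θ * t) - 1|
            + (pr θ * Real.exp (h θ * t)) * |1 - 1 / Z| := by
            rw [abs_mul, abs_mul, abs_of_nonneg (hpr θ),
              abs_of_nonneg (mul_nonneg (hpr θ) (Real.exp_nonneg _)), abs_sub_comm]
        _ = pr θ * |Real.exp (h θ * t) - 1|
            + (|Z - 1| / Z) * (pr θ * Real.exp (h θ * t)) := by
            rw [← hZdef] at hZp
            have h1 : (1:ℝ) - 1 / Z = (Z - 1) / Z := by field_simp
            rw [h1, abs_div, abs_of_pos hZp]
            ring
    have hIntRHS : Integrable (fun θ => pr θ * |Real.exp (h θ * t) - 1|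
        + (|Z - 1| / Z) * (pr θ * Real.exp (h θ * t))) :=
      (hIntAbs t ht).add ((hInt t ht).const_mul _)
    have hIntL : Integrable (fun θ =>
        |pr θ - pr θ * Real.exp (h θ * t) / Z|) :=
      (hpr_int.sub ((hInt t ht).div_const Z)).abs
    calc ∫ θ, |pr θ - pr θ * Real.exp (h θ * t) / Z|
        ≤ ∫ θ, (pr θ * |Real.exp (h θ * t) - 1|
            + (|Z - 1| / Z) * (pr θ * Real.exp (h θ * t))) :=
          integral_mono hIntL hIntRHS hptwise
      _ = F t + (|Z - 1| / Z) * Z := by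
          rw [integral_add (hIntAbs t ht) ((hInt t ht).const_mul _),
            integral_const_mul]
      _ = F t + |Z - 1| := by
          congr 1
          field_simp [show Z ≠ 0 from hZp.ne']
      _ ≤ F t + F t := by linarith [hZ1 t ht]
      _ = 2 * F t := by ring
  -- bound on the sup
  set K : ℝ → ℝ := fun t => ⨆ τ : ℝ,
      |(∫ θ in Set.Iic τ, pr θ) -
        ∫ θ in Set.Iic τ, pr θ * Real.exp (h θ * t) /
          (∫ θ', pr θ' * Real.exp (h θ' * t))| with hK
  have hKle : ∀ t ∈ Set.Icc (-ε) ε, ∀ τ : ℝ,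
      |(∫ θ in Set.Iic τ, pr θ) -
        ∫ θ in Set.Iic τ, pr θ * Real.exp (h θ * t) /
          (∫ θ', pr θ' * Real.exp (h θ' * t))| ≤ 2 * F t := by
    intro t ht τ
    set Z := ∫ θ', pr θ' * Real.exp (h θ' * t) with hZdef
    have hintt : Integrable (fun θ => pr θ * Real.exp (h θ * t) / Z) :=
      (hInt t ht).div_const Z
    have hsub : (∫ θ in Set.Iic τ, pr θ) -
        ∫ θ in Set.Iic τ, pr θ * Real.exp (h θ * t) / Z
        = ∫ θ in Set.Iic τ, (pr θ - pr θ * Real.exp (h θ * t) / Z) := by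
      rw [integral_sub hpr_int.restrict hintt.restrict]
    rw [hsub]
    calc |∫ θ in Set.Iic τ, (pr θ - pr θ * Real.exp (h θ * t) / Z)|
        ≤ ∫ θ in Set.Iic τ, |pr θ - pr θ * Real.exp (h θ * t) / Z| :=
          abs_set_int_le_int_abs _ _
      _ ≤ ∫ θ, |pr θ - pr θ * Real.exp (h θ * t) / Z| := by
          apply setIntegral_le_integral (hpr_int.sub hintt).abs
          filter_upwards with θ using abs_nonneg _
      _ ≤ 2 * F t := hL1 t ht
  have hKle' : ∀ t ∈ Set.Icc (-ε) ε, K t ≤ 2 * F t := by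
    intro t ht
    exact ciSup_le (hKle t ht)
  have hKnonneg : ∀ t ∈ Set.Icc (-ε) ε, 0 ≤ K t := by
    intro t ht
    have hbdd : BddAbove (Set.range fun τ : ℝ =>
        |(∫ θ in Set.Iic τ, pr θ) -
          ∫ θ in Set.Iic τ, pr θ * Real.exp (h θ * t) /
            (∫ θ', pr θ' * Real.exp (h θ' * t))|) := by
      refine ⟨2 * F t, ?_⟩
      rintro x ⟨τ, rfl⟩
      exact hKle t ht τ
    exact le_trans (abs_nonneg _) (le_ciSup hbdd (0:ℝ))
  -- squeeze
  have h2F : Filter.Tendsto (fun t => 2 * F t) l (nhds 0) := by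
    have := hF0.const_mul (2:ℝ)
    simpa using this
  have hmem : ∀ᶠ t in l, t ∈ Set.Icc (-ε) ε := self_mem_nhdsWithin
  exact tendsto_of_tendsto_of_tendsto_of_le_of_le' tendsto_const_nhds h2F
    (by filter_upwards [hmem] with t ht using hKnonneg t ht)
    (by filter_upwards [hmem] with t ht using hKle' t ht)
end
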